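/- Every peculiar graph G has independence number \alpha(G) = 3, and every independent set of size three in G has exactly one vertex in each of the cliques K_1, K_2, K_3. -/
import Mathlib

set_option maxHeartbeats 1000000

lemma indep_card_le_two {V : Type*} [DecidableEq V] (G : SimpleGraph V)
    (S Bp Kc : Finset V) (u : V)
    (hind : ∀ a ∈ S, ∀ b ∈ S, ¬ G.Adj a b) (hu : u ∈ S)
    (hcls : ∀ v ∈ S, v ≠ u → v ∈ Bp ∨ v ∈ Kc)
    (hBB : ∀ v ∈ Bp, ∀ w ∈ Bp, v ≠ w → G.Adj v w)
    (hKc : G.IsClique ↑Kc)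
    (hBK : ∀ v ∈ Bp, ∀ w ∈ Kc, G.Adj w v) : S.card ≤ 2 := by
  by_contra hc
  push_neg at hc
  rw [Finset.two_lt_card_iff] at hc
  obtain ⟨a, b, c, ha, hb, hcS, hab, hac, hbc⟩ := hc
  have pair : ∀ v ∈ S, ∀ w ∈ S, v ≠ u → w ≠ u → v = w := by
    intro v hv w hw hvu hwu
    by_contra hvw
    rcases hcls v hv hvu with hvB | hvK <;> rcases hcls w hw hwu with hwB | hwK
    · exact hind v hv w hw (hBB v hvB w hwB hvw)
    · exact hind w hw v hv (hBK v hvB w hwK)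
    · exact hind v hv w hw (hBK w hwB v hvK)
    · exact hind v hv w hw (hKc (Finset.mem_coe.mpr hvK) (Finset.mem_coe.mpr hwK) hvw)
  rcases eq_or_ne a u with rfl | hau
  · exact hbc (pair b hb c hcS (Ne.symm hab) (Ne.symm hac))
  · rcases eq_or_ne b u with rfl | hbu
    · exact hac (pair a ha c hcS hau (Ne.symm hbc))
    · exact hab (pair a ha b hb hau hbu)


/-- `Peculiar G A₁ A₂ A₃ B₁ B₂ B₃ K₁ K₂ K₃` says that the graph `G` is a peculiar graph
(in the sense of Chvátal and Sbihi) with the indicated construction data: the nine nonempty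
sets partition the vertices; `K = A₁ ∪ A₂ ∪ A₃ ∪ B₁ ∪ B₂ ∪ B₃` is a clique from which at
least one edge between `A₁,B₂`, between `A₂,B₃` and between `A₃,B₁` has been removed (and
only such edges may be missing); `K₁,K₂,K₃` are cliques, pairwise anticomplete, and each
vertex of `Kᵢ` is adjacent exactly to the vertices of `K \ (Aᵢ ∪ Bᵢ)` among `K`. -/
structure Peculiar {V : Type*} [Fintype V] [DecidableEq V] (G : SimpleGraph V)
    (A₁ A₂ A₃ B₁ B₂ B₃ K₁ K₂ K₃ : Finset V) : Prop where
  nA₁ : A₁.Nonempty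
  nA₂ : A₂.Nonempty
  nA₃ : A₃.Nonempty
  nB₁ : B₁.Nonempty
  nB₂ : B₂.Nonempty
  nB₃ : B₃.Nonempty
  nK₁ : K₁.Nonempty
  nK₂ : K₂.Nonempty
  nK₃ : K₃.Nonempty
  disj : ([A₁, A₂, A₃, B₁, B₂, B₃, K₁, K₂, K₃] : List (Finset V)).Pairwise Disjoint
  cover : A₁ ∪ A₂ ∪ A₃ ∪ B₁ ∪ B₂ ∪ B₃ ∪ K₁ ∪ K₂ ∪ K₃ = Finset.univ
  /-- inside `K`, only pairs from `(A₁,B₂)`, `(A₂,B₃)`, `(A₃,B₁)` may be non-adjacent -/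
  Kadj : ∀ u ∈ A₁ ∪ A₂ ∪ A₃ ∪ B₁ ∪ B₂ ∪ B₃, ∀ v ∈ A₁ ∪ A₂ ∪ A₃ ∪ B₁ ∪ B₂ ∪ B₃,
    u ≠ v → ¬ G.Adj u v →
      ((u ∈ A₁ ∧ v ∈ B₂) ∨ (v ∈ A₁ ∧ u ∈ B₂) ∨ (u ∈ A₂ ∧ v ∈ B₃) ∨ (v ∈ A₂ ∧ u ∈ B₃) ∨
        (u ∈ A₃ ∧ v ∈ B₁) ∨ (v ∈ A₃ ∧ u ∈ B₁))
  missing₁ : ∃ u ∈ A₁, ∃ v ∈ B₂, ¬ G.Adj u v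
  missing₂ : ∃ u ∈ A₂, ∃ v ∈ B₃, ¬ G.Adj u v
  missing₃ : ∃ u ∈ A₃, ∃ v ∈ B₁, ¬ G.Adj u v
  cliqueK₁ : G.IsClique ↑K₁
  cliqueK₂ : G.IsClique ↑K₂
  cliqueK₃ : G.IsClique ↑K₃
  adjK₁ : ∀ u ∈ K₁, ∀ v ∈ A₁ ∪ A₂ ∪ A₃ ∪ B₁ ∪ B₂ ∪ B₃, (G.Adj u v ↔ v ∉ A₁ ∪ B₁)
  adjK₂ : ∀ u ∈ K₂, ∀ v ∈ A₁ ∪ A₂ ∪ A₃ ∪ B₁ ∪ B₂ ∪ B₃, (G.Adj u v ↔ v ∉ A₂ ∪ B₂)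
  adjK₃ : ∀ u ∈ K₃, ∀ v ∈ A₁ ∪ A₂ ∪ A₃ ∪ B₁ ∪ B₂ ∪ B₃, (G.Adj u v ↔ v ∉ A₃ ∪ B₃)
  antiK₁₂ : ∀ u ∈ K₁, ∀ v ∈ K₂, ¬ G.Adj u v
  antiK₁₃ : ∀ u ∈ K₁, ∀ v ∈ K₃, ¬ G.Adj u v
  antiK₂₃ : ∀ u ∈ K₂, ∀ v ∈ K₃, ¬ G.Adj u v

/-- A peculiar graph `G` has independence number `α(G) = 3`, and any independent set of
size three has exactly one vertex in each of `K₁, K₂, K₃`. -/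
theorem peculiar_independence_number {V : Type*} [Fintype V] [DecidableEq V]
    (G : SimpleGraph V) (A₁ A₂ A₃ B₁ B₂ B₃ K₁ K₂ K₃ : Finset V)
    (h : Peculiar G A₁ A₂ A₃ B₁ B₂ B₃ K₁ K₂ K₃) :
    (∃ S : Finset V, (∀ u ∈ S, ∀ v ∈ S, ¬ G.Adj u v) ∧ S.card = 3) ∧
    (∀ S : Finset V, (∀ u ∈ S, ∀ v ∈ S, ¬ G.Adj u v) → S.card ≤ 3) ∧
    (∀ S : Finset V, (∀ u ∈ S, ∀ v ∈ S, ¬ G.Adj u v) → S.card = 3 →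
      (S ∩ K₁).card = 1 ∧ (S ∩ K₂).card = 1 ∧ (S ∩ K₃).card = 1) := by
  obtain ⟨x₁, hx₁⟩ := h.nK₁
  obtain ⟨x₂, hx₂⟩ := h.nK₂
  obtain ⟨x₃, hx₃⟩ := h.nK₃
  have hd := h.disj
  simp only [List.pairwise_cons, List.mem_cons, List.mem_singleton, List.not_mem_nil,
    forall_eq_or_imp, forall_eq, List.Pairwise.nil, and_true] at hd
  obtain ⟨⟨dA1A2, dA1A3, dA1B1, dA1B2, dA1B3, dA1K1, dA1K2, dA1K3, -⟩,
    ⟨dA2A3, dA2B1, dA2B2, dA2B3, dA2K1, dA2K2, dA2K3, -⟩,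
    ⟨dA3B1, dA3B2, dA3B3, dA3K1, dA3K2, dA3K3, -⟩,
    ⟨dB1B2, dB1B3, dB1K1, dB1K2, dB1K3, -⟩,
    ⟨dB2B3, dB2K1, dB2K2, dB2K3, -⟩,
    ⟨dB3K1, dB3K2, dB3K3, -⟩,
    ⟨dK1K2, dK1K3, -⟩, ⟨dK2K3, -⟩, -⟩ := hd
  have no : ∀ {s t : Finset V}, Disjoint s t → ∀ {v : V}, v ∈ s → v ∈ t → False :=
    by
    intro s t d v hv hw
    exact Finset.disjoint_left.mp d hv hw
  have mem6 : ∀ {v : V}, (v ∈ A₁ ∨ v ∈ A₂ ∨ v ∈ A₃ ∨ v ∈ B₁ ∨ v ∈ B₂ ∨ v ∈ B₃) →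
      v ∈ A₁ ∪ A₂ ∪ A₃ ∪ B₁ ∪ B₂ ∪ B₃ := by
    intro v hv; simp only [Finset.mem_union]; tauto
  have loc : ∀ v : V, v ∈ A₁ ∪ A₂ ∪ A₃ ∪ B₁ ∪ B₂ ∪ B₃ ∨ v ∈ K₁ ∨ v ∈ K₂ ∨ v ∈ K₃ := by
    intro v
    have hv : v ∈ A₁ ∪ A₂ ∪ A₃ ∪ B₁ ∪ B₂ ∪ B₃ ∪ K₁ ∪ K₂ ∪ K₃ := h.cover ▸ Finset.mem_univ v
    simp only [Finset.mem_union] at hv ⊢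
    tauto
  -- Key: an independent set meeting the central part has at most 2 elements.
  have key : ∀ S : Finset V, (∀ a ∈ S, ∀ b ∈ S, ¬ G.Adj a b) → ∀ u ∈ S,
      u ∈ A₁ ∪ A₂ ∪ A₃ ∪ B₁ ∪ B₂ ∪ B₃ → S.card ≤ 2 := by
    intro S hS u huS huK
    have huK' := huK
    simp only [Finset.mem_union] at huK'
    rcases huK' with ((((hu | hu) | hu) | hu) | hu) | hu
    · -- u ∈ A₁ : partner B₂, clique K₁
      refine indep_card_le_two G S B₂ K₁ u hS huS ?_ ?_ h.cliqueK₁ ?_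
      · intro v hv hvu
        have nadj := hS u huS v hv
        rcases loc v with hvK | hv1 | hv2 | hv3
        · rcases h.Kadj u huK v hvK (Ne.symm hvu) nadj with
            ⟨_, hb⟩ | ⟨_, hb⟩ | ⟨hb, _⟩ | ⟨_, hb⟩ | ⟨hb, _⟩ | ⟨_, hb⟩
          · exact Or.inl hb
          · exact (no dA1B2 hu hb).elim
          · exact (no dA1A2 hu hb).elim
          · exact (no dA1B3 hu hb).elim
          · exact (no dA1A3 hu hb).elim
          · exact (no dA1B1 hu hb).elim
        · exact Or.inr hv1
        · exact (hS v hv u huS ((h.adjK₂ v hv2 u huK).mpr (by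
            simp only [Finset.mem_union]
            rintro (h' | h')
            exacts [no dA1A2 hu h', no dA1B2 hu h']))).elim
        · exact (hS v hv u huS ((h.adjK₃ v hv3 u huK).mpr (by
            simp only [Finset.mem_union]
            rintro (h' | h')
            exacts [no dA1A3 hu h', no dA1B3 hu h']))).elim
      · intro v hvB w hwB hvw
        by_contra hnadj
        rcases h.Kadj v (mem6 (by tauto)) w (mem6 (by tauto)) hvw hnadj with
          ⟨ha, _⟩ | ⟨ha, _⟩ | ⟨ha, _⟩ | ⟨ha, _⟩ | ⟨ha, _⟩ | ⟨ha, _⟩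
        exacts [no dA1B2 ha hvB, no dA1B2 ha hwB, no dA2B2 ha hvB,
          no dA2B2 ha hwB, no dA3B2 ha hvB, no dA3B2 ha hwB]
      · intro v hvB w hwK
        refine (h.adjK₁ w hwK v (mem6 (by tauto))).mpr ?_
        simp only [Finset.mem_union]
        rintro (h' | h')
        exacts [no dA1B2 h' hvB, no dB1B2 h' hvB]
    · -- u ∈ A₂ : partner B₃, clique K₂
      refine indep_card_le_two G S B₃ K₂ u hS huS ?_ ?_ h.cliqueK₂ ?_
      · intro v hv hvu
        have nadj := hS u huS v hv
        rcases loc v with hvK | hv1 | hv2 | hv3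
        · rcases h.Kadj u huK v hvK (Ne.symm hvu) nadj with
            ⟨hb, _⟩ | ⟨_, hb⟩ | ⟨_, hb⟩ | ⟨_, hb⟩ | ⟨hb, _⟩ | ⟨_, hb⟩
          · exact (no dA1A2 hb hu).elim
          · exact (no dA2B2 hu hb).elim
          · exact Or.inl hb
          · exact (no dA2B3 hu hb).elim
          · exact (no dA2A3 hu hb).elim
          · exact (no dA2B1 hu hb).elim
        · exact (hS v hv u huS ((h.adjK₁ v hv1 u huK).mpr (by
            simp only [Finset.mem_union]
            rintro (h' | h')
            exacts [no dA1A2 h' hu, no dA2B1 hu h']))).elim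
        · exact Or.inr hv2
        · exact (hS v hv u huS ((h.adjK₃ v hv3 u huK).mpr (by
            simp only [Finset.mem_union]
            rintro (h' | h')
            exacts [no dA2A3 hu h', no dA2B3 hu h']))).elim
      · intro v hvB w hwB hvw
        by_contra hnadj
        rcases h.Kadj v (mem6 (by tauto)) w (mem6 (by tauto)) hvw hnadj with
          ⟨ha, _⟩ | ⟨ha, _⟩ | ⟨ha, _⟩ | ⟨ha, _⟩ | ⟨ha, _⟩ | ⟨ha, _⟩
        exacts [no dA1B3 ha hvB, no dA1B3 ha hwB, no dA2B3 ha hvB,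
          no dA2B3 ha hwB, no dA3B3 ha hvB, no dA3B3 ha hwB]
      · intro v hvB w hwK
        refine (h.adjK₂ w hwK v (mem6 (by tauto))).mpr ?_
        simp only [Finset.mem_union]
        rintro (h' | h')
        exacts [no dA2B3 h' hvB, no dB2B3 h' hvB]
    · -- u ∈ A₃ : partner B₁, clique K₃
      refine indep_card_le_two G S B₁ K₃ u hS huS ?_ ?_ h.cliqueK₃ ?_
      · intro v hv hvu
        have nadj := hS u huS v hv
        rcases loc v with hvK | hv1 | hv2 | hv3
        · rcases h.Kadj u huK v hvK (Ne.symm hvu) nadj with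
            ⟨hb, _⟩ | ⟨_, hb⟩ | ⟨hb, _⟩ | ⟨_, hb⟩ | ⟨_, hb⟩ | ⟨_, hb⟩
          · exact (no dA1A3 hb hu).elim
          · exact (no dA3B2 hu hb).elim
          · exact (no dA2A3 hb hu).elim
          · exact (no dA3B3 hu hb).elim
          · exact Or.inl hb
          · exact (no dA3B1 hu hb).elim
        · exact (hS v hv u huS ((h.adjK₁ v hv1 u huK).mpr (by
            simp only [Finset.mem_union]
            rintro (h' | h')
            exacts [no dA1A3 h' hu, no dA3B1 hu h']))).elim
        · exact (hS v hv u huS ((h.adjK₂ v hv2 u huK).mpr (by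
            simp only [Finset.mem_union]
            rintro (h' | h')
            exacts [no dA2A3 h' hu, no dA3B2 hu h']))).elim
        · exact Or.inr hv3
      · intro v hvB w hwB hvw
        by_contra hnadj
        rcases h.Kadj v (mem6 (by tauto)) w (mem6 (by tauto)) hvw hnadj with
          ⟨ha, _⟩ | ⟨ha, _⟩ | ⟨ha, _⟩ | ⟨ha, _⟩ | ⟨ha, _⟩ | ⟨ha, _⟩
        exacts [no dA1B1 ha hvB, no dA1B1 ha hwB, no dA2B1 ha hvB,
          no dA2B1 ha hwB, no dA3B1 ha hvB, no dA3B1 ha hwB]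
      · intro v hvB w hwK
        refine (h.adjK₃ w hwK v (mem6 (by tauto))).mpr ?_
        simp only [Finset.mem_union]
        rintro (h' | h')
        exacts [no dA3B1 h' hvB, no dB1B3 hvB h']
    · -- u ∈ B₁ : partner A₃, clique K₁
      refine indep_card_le_two G S A₃ K₁ u hS huS ?_ ?_ h.cliqueK₁ ?_
      · intro v hv hvu
        have nadj := hS u huS v hv
        rcases loc v with hvK | hv1 | hv2 | hv3
        · rcases h.Kadj u huK v hvK (Ne.symm hvu) nadj with
            ⟨hb, _⟩ | ⟨_, hb⟩ | ⟨hb, _⟩ | ⟨_, hb⟩ | ⟨hb, _⟩ | ⟨hb, _⟩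
          · exact (no dA1B1 hb hu).elim
          · exact (no dB1B2 hu hb).elim
          · exact (no dA2B1 hb hu).elim
          · exact (no dB1B3 hu hb).elim
          · exact (no dA3B1 hb hu).elim
          · exact Or.inl hb
        · exact Or.inr hv1
        · exact (hS v hv u huS ((h.adjK₂ v hv2 u huK).mpr (by
            simp only [Finset.mem_union]
            rintro (h' | h')
            exacts [no dA2B1 h' hu, no dB1B2 hu h']))).elim
        · exact (hS v hv u huS ((h.adjK₃ v hv3 u huK).mpr (by
            simp only [Finset.mem_union]
            rintro (h' | h')
            exacts [no dA3B1 h' hu, no dB1B3 hu h']))).elim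
      · intro v hvB w hwB hvw
        by_contra hnadj
        rcases h.Kadj v (mem6 (by tauto)) w (mem6 (by tauto)) hvw hnadj with
          ⟨ha, _⟩ | ⟨ha, _⟩ | ⟨ha, _⟩ | ⟨ha, _⟩ | ⟨_, hb⟩ | ⟨_, hb⟩
        exacts [no dA1A3 ha hvB, no dA1A3 ha hwB, no dA2A3 ha hvB,
          no dA2A3 ha hwB, no dA3B1 hwB hb, no dA3B1 hvB hb]
      · intro v hvB w hwK
        refine (h.adjK₁ w hwK v (mem6 (by tauto))).mpr ?_
        simp only [Finset.mem_union]
        rintro (h' | h')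
        exacts [no dA1A3 h' hvB, no dA3B1 hvB h']
    · -- u ∈ B₂ : partner A₁, clique K₂
      refine indep_card_le_two G S A₁ K₂ u hS huS ?_ ?_ h.cliqueK₂ ?_
      · intro v hv hvu
        have nadj := hS u huS v hv
        rcases loc v with hvK | hv1 | hv2 | hv3
        · rcases h.Kadj u huK v hvK (Ne.symm hvu) nadj with
            ⟨hb, _⟩ | ⟨hb, _⟩ | ⟨hb, _⟩ | ⟨_, hb⟩ | ⟨hb, _⟩ | ⟨_, hb⟩
          · exact (no dA1B2 hb hu).elim
          · exact Or.inl hb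
          · exact (no dA2B2 hb hu).elim
          · exact (no dB2B3 hu hb).elim
          · exact (no dA3B2 hb hu).elim
          · exact (no dB1B2 hb hu).elim
        · exact (hS v hv u huS ((h.adjK₁ v hv1 u huK).mpr (by
            simp only [Finset.mem_union]
            rintro (h' | h')
            exacts [no dA1B2 h' hu, no dB1B2 h' hu]))).elim
        · exact Or.inr hv2
        · exact (hS v hv u huS ((h.adjK₃ v hv3 u huK).mpr (by
            simp only [Finset.mem_union]
            rintro (h' | h')
            exacts [no dA3B2 h' hu, no dB2B3 hu h']))).elim
      · intro v hvB w hwB hvw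
        by_contra hnadj
        rcases h.Kadj v (mem6 (by tauto)) w (mem6 (by tauto)) hvw hnadj with
          ⟨_, hb⟩ | ⟨_, hb⟩ | ⟨ha, _⟩ | ⟨ha, _⟩ | ⟨ha, _⟩ | ⟨ha, _⟩
        exacts [no dA1B2 hwB hb, no dA1B2 hvB hb, no dA1A2 hvB ha,
          no dA1A2 hwB ha, no dA1A3 hvB ha, no dA1A3 hwB ha]
      · intro v hvB w hwK
        refine (h.adjK₂ w hwK v (mem6 (by tauto))).mpr ?_
        simp only [Finset.mem_union]
        rintro (h' | h')
        exacts [no dA1A2 hvB h', no dA1B2 hvB h']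
    · -- u ∈ B₃ : partner A₂, clique K₃
      refine indep_card_le_two G S A₂ K₃ u hS huS ?_ ?_ h.cliqueK₃ ?_
      · intro v hv hvu
        have nadj := hS u huS v hv
        rcases loc v with hvK | hv1 | hv2 | hv3
        · rcases h.Kadj u huK v hvK (Ne.symm hvu) nadj with
            ⟨hb, _⟩ | ⟨_, hb⟩ | ⟨hb, _⟩ | ⟨hb, _⟩ | ⟨hb, _⟩ | ⟨_, hb⟩
          · exact (no dA1B3 hb hu).elim
          · exact (no dB2B3 hb hu).elim
          · exact (no dA2B3 hb hu).elim
          · exact Or.inl hb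
          · exact (no dA3B3 hb hu).elim
          · exact (no dB1B3 hb hu).elim
        · exact (hS v hv u huS ((h.adjK₁ v hv1 u huK).mpr (by
            simp only [Finset.mem_union]
            rintro (h' | h')
            exacts [no dA1B3 h' hu, no dB1B3 h' hu]))).elim
        · exact (hS v hv u huS ((h.adjK₂ v hv2 u huK).mpr (by
            simp only [Finset.mem_union]
            rintro (h' | h')
            exacts [no dA2B3 h' hu, no dB2B3 h' hu]))).elim
        · exact Or.inr hv3
      · intro v hvB w hwB hvw
        by_contra hnadj
        rcases h.Kadj v (mem6 (by tauto)) w (mem6 (by tauto)) hvw hnadj with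
          ⟨ha, _⟩ | ⟨ha, _⟩ | ⟨_, hb⟩ | ⟨_, hb⟩ | ⟨ha, _⟩ | ⟨ha, _⟩
        exacts [no dA1A2 ha hvB, no dA1A2 ha hwB, no dA2B3 hwB hb,
          no dA2B3 hvB hb, no dA2A3 hvB ha, no dA2A3 hwB ha]
      · intro v hvB w hwK
        refine (h.adjK₃ w hwK v (mem6 (by tauto))).mpr ?_
        simp only [Finset.mem_union]
        rintro (h' | h')
        exacts [no dA2A3 hvB h', no dA2B3 hvB h']
  -- caps
  have cap : ∀ S : Finset V, (∀ a ∈ S, ∀ b ∈ S, ¬ G.Adj a b) →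
      ∀ {Kc : Finset V}, G.IsClique ↑Kc → (S ∩ Kc).card ≤ 1 := by
    intro S hS Kc hKc
    refine Finset.card_le_one.mpr ?_
    intro a ha b hb
    rw [Finset.mem_inter] at ha hb
    by_contra hne
    exact hS a ha.1 b hb.1 (hKc (Finset.mem_coe.mpr ha.2) (Finset.mem_coe.mpr hb.2) hne)
  have main : ∀ S : Finset V, (∀ a ∈ S, ∀ b ∈ S, ¬ G.Adj a b) →
      S.card ≤ 2 ∨ S.card ≤ (S ∩ K₁).card + (S ∩ K₂).card + (S ∩ K₃).card := by
    intro S hS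
    by_cases hex : ∃ u ∈ S, u ∈ A₁ ∪ A₂ ∪ A₃ ∪ B₁ ∪ B₂ ∪ B₃
    · obtain ⟨u, huS, huK⟩ := hex
      exact Or.inl (key S hS u huS huK)
    · push_neg at hex
      right
      have hsub : S ⊆ (S ∩ K₁) ∪ (S ∩ K₂) ∪ (S ∩ K₃) := by
        intro x hx
        rcases loc x with hxK | hx1 | hx2 | hx3
        · exact absurd hxK (hex x hx)
        · exact Finset.mem_union_left _ (Finset.mem_union_left _ (Finset.mem_inter.mpr ⟨hx, hx1⟩))
        · exact Finset.mem_union_left _ (Finset.mem_union_right _ (Finset.mem_inter.mpr ⟨hx, hx2⟩))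
        · exact Finset.mem_union_right _ (Finset.mem_inter.mpr ⟨hx, hx3⟩)
      calc S.card ≤ ((S ∩ K₁) ∪ (S ∩ K₂) ∪ (S ∩ K₃)).card := Finset.card_le_card hsub
        _ ≤ ((S ∩ K₁) ∪ (S ∩ K₂)).card + (S ∩ K₃).card := Finset.card_union_le _ _
        _ ≤ (S ∩ K₁).card + (S ∩ K₂).card + (S ∩ K₃).card := by
            have := Finset.card_union_le (S ∩ K₁) (S ∩ K₂); omega
  refine ⟨?_, ?_, ?_⟩
  · -- existence
    have h12 : x₁ ≠ x₂ := fun e => no dK1K2 hx₁ (e ▸ hx₂)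
    have h13 : x₁ ≠ x₃ := fun e => no dK1K3 hx₁ (e ▸ hx₃)
    have h23 : x₂ ≠ x₃ := fun e => no dK2K3 hx₂ (e ▸ hx₃)
    refine ⟨{x₁, x₂, x₃}, ?_, ?_⟩
    · intro u hu v hv
      simp only [Finset.mem_insert, Finset.mem_singleton] at hu hv
      rcases hu with rfl | rfl | rfl <;> rcases hv with rfl | rfl | rfl
      · exact G.irrefl
      · exact h.antiK₁₂ u hx₁ v hx₂
      · exact h.antiK₁₃ u hx₁ v hx₃
      · exact fun a => h.antiK₁₂ v hx₁ u hx₂ a.symm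
      · exact G.irrefl
      · exact h.antiK₂₃ u hx₂ v hx₃
      · exact fun a => h.antiK₁₃ v hx₁ u hx₃ a.symm
      · exact fun a => h.antiK₂₃ v hx₂ u hx₃ a.symm
      · exact G.irrefl
    · rw [Finset.card_insert_of_notMem (by simp [h12, h13]),
        Finset.card_insert_of_notMem (by simp [h23]), Finset.card_singleton]
  · -- upper bound
    intro S hS
    rcases main S hS with h2 | hsum
    · omega
    · have c1 := cap S hS h.cliqueK₁
      have c2 := cap S hS h.cliqueK₂
      have c3 := cap S hS h.cliqueK₃
      omega
  · -- structure of size-3 independent sets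
    intro S hS h3
    have c1 := cap S hS h.cliqueK₁
    have c2 := cap S hS h.cliqueK₂
    have c3 := cap S hS h.cliqueK₃
    rcases main S hS with h2 | hsum
    · omega
    · omega
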